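/- For 0 < ν < 2 and σ = ν√(4 - ν²), the Akhmediev breather A_AEK(ξ,τ) = e^{2iτ} ( (ν³ cosh(στ) + iνσ sinh(στ)) / (2ν cosh(στ) - σ cos(νξ)) - 1 ) satisfies the temporal NLSE i ∂_τ A + ∂_ξ² A + 2|A|² A = 0 at all points where the denominator 2ν cosh(στ) - σ cos(νξ) is nonzero. -/

import Mathlib

open Real Complex

set_option maxHeartbeats 1000000 in
lemma key_alg (n g Ch Sh co si E : ℂ) (hD : 2*n*Ch - g*co ≠ 0)
    (h1 : Ch^2 = Sh^2 + 1) (h2 : si^2 + co^2 = 1) (h3 : g^2 = 4*n^2 - n^4) :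
    Complex.I * (2*Complex.I*E*((n^3*Ch + Complex.I*n*g*Sh)/(2*n*Ch - g*co) - 1)
      + E*((n^3*g*Sh + Complex.I*n*g^2*Ch)/(2*n*Ch - g*co)
           - (n^3*Ch + Complex.I*n*g*Sh)*(2*n*g*Sh)/(2*n*Ch - g*co)^2))
    + (E * (-((n^3*Ch + Complex.I*n*g*Sh)*(n^2*g*co))/(2*n*Ch - g*co)^2
        + 2*(n^3*Ch + Complex.I*n*g*Sh)*(n*g*si)^2/(2*n*Ch - g*co)^3))
    + 2 * (((n^3*Ch + Complex.I*n*g*Sh)/(2*n*Ch - g*co) - 1)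
          * ((n^3*Ch - Complex.I*n*g*Sh)/(2*n*Ch - g*co) - 1))
        * (E*((n^3*Ch + Complex.I*n*g*Sh)/(2*n*Ch - g*co) - 1)) = 0 := by
  set D : ℂ := 2*n*Ch - g*co with hDdef
  set N : ℂ := n^3*Ch + Complex.I*n*g*Sh with hNdef
  set M : ℂ := n^3*Ch - Complex.I*n*g*Sh with hMdef
  have e1 : Complex.I * (2*Complex.I*E*(N/D - 1)
      + E*((n^3*g*Sh + Complex.I*n*g^2*Ch)/D - N*(2*n*g*Sh)/D^2))
      = E * (Complex.I*(2*Complex.I*(N-D)*D^2 + (n^3*g*Sh + Complex.I*n*g^2*Ch)*D^2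
             - N*(2*n*g*Sh)*D)) / D^3 := by
    field_simp
    ring
  have e2 : E * (-(N*(n^2*g*co))/D^2 + 2*N*(n*g*si)^2/D^3)
      = E * (-(N*(n^2*g*co))*D + 2*N*(n*g*si)^2) / D^3 := by
    field_simp
  have e3 : 2 * ((N/D - 1) * (M/D - 1)) * (E*(N/D - 1))
      = E * (2*(N-D)*(M-D)*(N-D)) / D^3 := by
    field_simp
  rw [e1, e2, e3, ← add_div, ← add_div, div_eq_zero_iff]
  left
  rw [hNdef, hMdef, hDdef]
  have hI : Complex.I^2 = -1 := Complex.I_sq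
  linear_combination E * (((2)*g^3*co^3 + (-12)*n*g^2*Ch*co^2 + (2)*n*g^3*Sh*co^2*Complex.I + n*g^4*Ch*co^2 + (24)*n^2*g*Ch^2*co + (-8)*n^2*g^2*Ch*Sh*co*Complex.I + (-4)*n^2*g^3*Ch^2*co + (-16)*n^3*Ch^3 + (8)*n^3*g*Ch^2*Sh*Complex.I + (2)*n^3*g^2*Ch*co^2 + (4)*n^3*g^2*Ch^3 + (-2)*n^3*g^3*Sh^3*Complex.I + (-8)*n^4*g*Ch^2*co + (8)*n^5*Ch^3 + (-2)*n^5*g^2*Ch*Sh^2) * hI + ((4)*n^2*g^3*co + (-4)*n^3*g^2*Ch + (-16)*n^4*g*co + (16)*n^5*Ch + (-8)*n^5*g*Sh*Complex.I + (4)*n^6*g*co + (-12)*n^7*Ch + (2)*n^7*g*Sh*Complex.I + (2)*n^9*Ch) * h1 + ((2)*n^3*g^3*Sh*Complex.I + (2)*n^5*g^2*Ch) * h2 + ((-1)*n*g^2*Ch*co^2 + (4)*n^2*g*co + (4)*n^2*g*Sh^2*co + (-4)*n^3*Ch + (-4)*n^3*Ch*Sh^2 + (2)*n^3*g*Sh*Complex.I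 + (2)*n^3*g*Sh^3*Complex.I + (2)*n^5*Ch + (2)*n^5*Ch*Sh^2) * h3)

lemma split1 (a b d : ℂ) (hd : d ≠ 0) : (a*d - b)/d^2 = a/d - b/d^2 := by
  field_simp

lemma split2 (p q r d : ℂ) (hd : d ≠ 0) :
    (p*d^2 - q*(((2:ℕ):ℂ)*d^(2-1)*r))/(d^2)^2 = p/d^2 - q*(2*r)/d^3 := by
  field_simp
  ring

/-- The Akhmediev breather satisfies the temporal NLSE
`i ∂_τ A + ∂_ξ² A + 2|A|² A = 0` wherever its denominator
`2ν cosh(στ) - σ cos(νξ)` is nonzero, with `0 < ν < 2` and `σ = ν√(4-ν²)`. -/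
theorem stmt_10 (ν : ℝ) (hν : 0 < ν) (hν2 : ν < 2) (σ : ℝ)
    (hσ : σ = ν * Real.sqrt (4 - ν ^ 2))
    (A : ℝ → ℝ → ℂ)
    (hA : ∀ ξ τ : ℝ, A ξ τ = Complex.exp (2 * Complex.I * (τ : ℂ)) *
      (((ν : ℂ) ^ 3 * (Real.cosh (σ * τ) : ℂ) +
          Complex.I * (ν : ℂ) * (σ : ℂ) * (Real.sinh (σ * τ) : ℂ)) /
        (2 * (ν : ℂ) * (Real.cosh (σ * τ) : ℂ) - (σ : ℂ) * (Real.cos (ν * ξ) : ℂ)) - 1)) :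
    ∀ ξ τ : ℝ, 2 * ν * Real.cosh (σ * τ) - σ * Real.cos (ν * ξ) ≠ 0 →
      Complex.I * deriv (fun t : ℝ => A ξ t) τ +
        iteratedDeriv 2 (fun x : ℝ => A x τ) ξ +
        2 * (↑‖A ξ τ‖ : ℂ) ^ 2 * A ξ τ = 0 := by
  intro ξ τ hne
  have hDC : 2*(ν:ℂ)*(Real.cosh (σ*τ):ℂ) - (σ:ℂ)*(Real.cos (ν*ξ):ℂ) ≠ 0 := by
    intro h
    exact hne (by exact_mod_cast h)
  have h1 : ((Real.cosh (σ*τ):ℝ):ℂ)^2 = ((Real.sinh (σ*τ):ℝ):ℂ)^2 + 1 := by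
    exact_mod_cast Real.cosh_sq (σ*τ)
  have h2 : ((Real.sin (ν*ξ):ℝ):ℂ)^2 + ((Real.cos (ν*ξ):ℝ):ℂ)^2 = 1 := by
    exact_mod_cast Real.sin_sq_add_cos_sq (ν*ξ)
  have h3 : (σ:ℂ)^2 = 4*(ν:ℂ)^2 - (ν:ℂ)^4 := by
    have hr : σ^2 = 4*ν^2 - ν^4 := by
      rw [hσ, mul_pow, Real.sq_sqrt (by nlinarith : (0:ℝ) ≤ 4 - ν^2)]; ring
    exact_mod_cast hr
  -- time derivative
  have hd1 : deriv (fun t : ℝ => A ξ t) τ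
      = 2*Complex.I*Complex.exp (2*Complex.I*(τ:ℂ))
          *(((ν:ℂ)^3*(Real.cosh (σ*τ):ℂ) + Complex.I*(ν:ℂ)*(σ:ℂ)*(Real.sinh (σ*τ):ℂ))
              /(2*(ν:ℂ)*(Real.cosh (σ*τ):ℂ) - (σ:ℂ)*(Real.cos (ν*ξ):ℂ)) - 1)
        + Complex.exp (2*Complex.I*(τ:ℂ))
          *(((ν:ℂ)^3*(σ:ℂ)*(Real.sinh (σ*τ):ℂ) + Complex.I*(ν:ℂ)*(σ:ℂ)^2*(Real.cosh (σ*τ):ℂ))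
               /(2*(ν:ℂ)*(Real.cosh (σ*τ):ℂ) - (σ:ℂ)*(Real.cos (ν*ξ):ℂ))
             - ((ν:ℂ)^3*(Real.cosh (σ*τ):ℂ) + Complex.I*(ν:ℂ)*(σ:ℂ)*(Real.sinh (σ*τ):ℂ))
                 *(2*(ν:ℂ)*(σ:ℂ)*(Real.sinh (σ*τ):ℂ))
               /(2*(ν:ℂ)*(Real.cosh (σ*τ):ℂ) - (σ:ℂ)*(Real.cos (ν*ξ):ℂ))^2) := by
    have hfun : (fun t : ℝ => A ξ t) = fun t : ℝ => Complex.exp (2*Complex.I*(t:ℂ)) *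
        (((ν:ℂ)^3*(Real.cosh (σ*t):ℂ) + Complex.I*(ν:ℂ)*(σ:ℂ)*(Real.sinh (σ*t):ℂ)) /
          (2*(ν:ℂ)*(Real.cosh (σ*t):ℂ) - (σ:ℂ)*(Real.cos (ν*ξ):ℂ)) - 1) := by
      funext t
      exact hA ξ t
    have hlin : HasDerivAt (fun t : ℝ => σ * t) σ τ := by
      simpa using (hasDerivAt_id τ).const_mul σ
    have hCh : HasDerivAt (fun t : ℝ => ((Real.cosh (σ*t) : ℝ) : ℂ))
        ((Real.sinh (σ*τ) * σ : ℝ) : ℂ) τ :=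
      ((Real.hasDerivAt_cosh (σ*τ)).comp τ hlin).ofReal_comp
    have hSh : HasDerivAt (fun t : ℝ => ((Real.sinh (σ*t) : ℝ) : ℂ))
        ((Real.cosh (σ*τ) * σ : ℝ) : ℂ) τ :=
      ((Real.hasDerivAt_sinh (σ*τ)).comp τ hlin).ofReal_comp
    have hNf : HasDerivAt (fun t : ℝ => (ν:ℂ)^3*(Real.cosh (σ*t):ℂ)
          + Complex.I*(ν:ℂ)*(σ:ℂ)*(Real.sinh (σ*t):ℂ))
        ((ν:ℂ)^3*((Real.sinh (σ*τ)*σ : ℝ):ℂ) + Complex.I*(ν:ℂ)*(σ:ℂ)*((Real.cosh (σ*τ)*σ : ℝ):ℂ)) τ :=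
      (hCh.const_mul _).add (hSh.const_mul _)
    have hDf : HasDerivAt (fun t : ℝ => 2*(ν:ℂ)*(Real.cosh (σ*t):ℂ) - (σ:ℂ)*(Real.cos (ν*ξ):ℂ))
        (2*(ν:ℂ)*((Real.sinh (σ*τ)*σ : ℝ):ℂ)) τ := (hCh.const_mul _).sub_const _
    have hqid : HasDerivAt (fun t : ℝ => (t:ℂ)) 1 τ := (hasDerivAt_id τ).ofReal_comp
    have hEt : HasDerivAt (fun t : ℝ => Complex.exp (2*Complex.I*(t:ℂ)))
        (Complex.exp (2*Complex.I*(τ:ℂ)) * (2*Complex.I*1)) τ := (hqid.const_mul _).cexp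
    have hdF : deriv (fun t : ℝ => Complex.exp (2*Complex.I*(t:ℂ)) *
        (((ν:ℂ)^3*(Real.cosh (σ*t):ℂ) + Complex.I*(ν:ℂ)*(σ:ℂ)*(Real.sinh (σ*t):ℂ)) /
          (2*(ν:ℂ)*(Real.cosh (σ*t):ℂ) - (σ:ℂ)*(Real.cos (ν*ξ):ℂ)) - 1)) τ
        = Complex.exp (2*Complex.I*(τ:ℂ)) * (2*Complex.I*1) *
            (((ν:ℂ)^3*(Real.cosh (σ*τ):ℂ) + Complex.I*(ν:ℂ)*(σ:ℂ)*(Real.sinh (σ*τ):ℂ)) /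
              (2*(ν:ℂ)*(Real.cosh (σ*τ):ℂ) - (σ:ℂ)*(Real.cos (ν*ξ):ℂ)) - 1)
          + Complex.exp (2*Complex.I*(τ:ℂ)) *
            ((((ν:ℂ)^3*((Real.sinh (σ*τ)*σ : ℝ):ℂ) + Complex.I*(ν:ℂ)*(σ:ℂ)*((Real.cosh (σ*τ)*σ : ℝ):ℂ)) *
                (2*(ν:ℂ)*(Real.cosh (σ*τ):ℂ) - (σ:ℂ)*(Real.cos (ν*ξ):ℂ))
              - ((ν:ℂ)^3*(Real.cosh (σ*τ):ℂ) + Complex.I*(ν:ℂ)*(σ:ℂ)*(Real.sinh (σ*τ):ℂ)) *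
                (2*(ν:ℂ)*((Real.sinh (σ*τ)*σ : ℝ):ℂ))) /
             (2*(ν:ℂ)*(Real.cosh (σ*τ):ℂ) - (σ:ℂ)*(Real.cos (ν*ξ):ℂ))^2) :=
      (hEt.mul ((hNf.div hDf hDC).sub_const 1)).deriv
    rw [hfun, hdF, split1 _ _ _ hDC]
    push_cast
    ring
  -- space second derivative
  have hd2 : iteratedDeriv 2 (fun x : ℝ => A x τ) ξ
      = Complex.exp (2*Complex.I*(τ:ℂ)) *
          (-(((ν:ℂ)^3*(Real.cosh (σ*τ):ℂ) + Complex.I*(ν:ℂ)*(σ:ℂ)*(Real.sinh (σ*τ):ℂ))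
               *((ν:ℂ)^2*(σ:ℂ)*(Real.cos (ν*ξ):ℂ)))
              /(2*(ν:ℂ)*(Real.cosh (σ*τ):ℂ) - (σ:ℂ)*(Real.cos (ν*ξ):ℂ))^2
           + 2*((ν:ℂ)^3*(Real.cosh (σ*τ):ℂ) + Complex.I*(ν:ℂ)*(σ:ℂ)*(Real.sinh (σ*τ):ℂ))
               *((ν:ℂ)*(σ:ℂ)*(Real.sin (ν*ξ):ℂ))^2
              /(2*(ν:ℂ)*(Real.cosh (σ*τ):ℂ) - (σ:ℂ)*(Real.cos (ν*ξ):ℂ))^3) := by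
    set E : ℂ := Complex.exp (2*Complex.I*(τ:ℂ)) with hE0
    set N : ℂ := (ν:ℂ)^3*(Real.cosh (σ*τ):ℂ) + Complex.I*(ν:ℂ)*(σ:ℂ)*(Real.sinh (σ*τ):ℂ) with hN0
    set F : ℝ → ℂ := fun x : ℝ => E * (N /
        (2*(ν:ℂ)*(Real.cosh (σ*τ):ℂ) - (σ:ℂ)*(Real.cos (ν*x):ℂ)) - 1) with hF0
    set G : ℝ → ℂ := fun x : ℝ => E * (-(N * ((σ:ℂ) * ((Real.sin (ν*x):ℂ) * (ν:ℂ)))) /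
        (2*(ν:ℂ)*(Real.cosh (σ*τ):ℂ) - (σ:ℂ)*(Real.cos (ν*x):ℂ))^2) with hG0
    have hfun : (fun x : ℝ => A x τ) = F := by
      funext x
      exact hA x τ
    clear_value N E
    have hDcx : ∀ x : ℝ, HasDerivAt
        (fun y : ℝ => 2*(ν:ℂ)*(Real.cosh (σ*τ):ℂ) - (σ:ℂ)*(Real.cos (ν*y):ℂ))
        (-((σ:ℂ) * ((-Real.sin (ν*x)*ν : ℝ):ℂ))) x := by
      intro x
      have hlin : HasDerivAt (fun y : ℝ => ν * y) ν x := by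
        simpa using (hasDerivAt_id x).const_mul ν
      exact ((((Real.hasDerivAt_cos (ν*x)).comp x hlin).ofReal_comp).const_mul
        (σ:ℂ)).const_sub (2*(ν:ℂ)*(Real.cosh (σ*τ):ℂ))
    have hGF : ∀ x : ℝ, (2*(ν:ℂ)*(Real.cosh (σ*τ):ℂ) - (σ:ℂ)*(Real.cos (ν*x):ℂ)) ≠ 0 →
        HasDerivAt F (G x) x := by
      intro x hx
      have h := (((hasDerivAt_const x N).div (hDcx x) hx).sub_const 1).const_mul E
      have hval : E * ((0 * (2*(ν:ℂ)*(Real.cosh (σ*τ):ℂ) - (σ:ℂ)*(Real.cos (ν*x):ℂ))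
            - N * (-((σ:ℂ) * ((-Real.sin (ν*x)*ν : ℝ):ℂ))))
          / (2*(ν:ℂ)*(Real.cosh (σ*τ):ℂ) - (σ:ℂ)*(Real.cos (ν*x):ℂ))^2) = G x := by
        rw [hG0]
        push_cast
        ring
      rw [hval] at h
      exact h
    have hcont : Continuous (fun x : ℝ => 2*(ν:ℂ)*(Real.cosh (σ*τ):ℂ) - (σ:ℂ)*(Real.cos (ν*x):ℂ)) := by
      fun_prop
    have hev : ∀ᶠ x in nhds ξ,
        (2*(ν:ℂ)*(Real.cosh (σ*τ):ℂ) - (σ:ℂ)*(Real.cos (ν*x):ℂ)) ≠ 0 :=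
      hcont.continuousAt.eventually_ne hDC
    have hEq : deriv F =ᶠ[nhds ξ] G := hev.mono fun x hx => (hGF x hx).deriv
    have hlin : HasDerivAt (fun y : ℝ => ν * y) ν ξ := by
      simpa using (hasDerivAt_id ξ).const_mul ν
    have hsin : HasDerivAt (fun x : ℝ => ((Real.sin (ν*x) : ℝ):ℂ)) ((Real.cos (ν*ξ)*ν : ℝ):ℂ) ξ :=
      ((Real.hasDerivAt_sin (ν*ξ)).comp ξ hlin).ofReal_comp
    have hnum : HasDerivAt (fun x : ℝ => -(N * ((σ:ℂ) * ((Real.sin (ν*x):ℂ) * (ν:ℂ)))))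
        (-(N * ((σ:ℂ) * (((Real.cos (ν*ξ)*ν : ℝ):ℂ) * (ν:ℂ))))) ξ :=
      (((hsin.mul_const _).const_mul _).const_mul _).neg
    have hden : HasDerivAt
        (fun x : ℝ => (2*(ν:ℂ)*(Real.cosh (σ*τ):ℂ) - (σ:ℂ)*(Real.cos (ν*x):ℂ))^2)
        (((2:ℕ):ℂ) * (2*(ν:ℂ)*(Real.cosh (σ*τ):ℂ) - (σ:ℂ)*(Real.cos (ν*ξ):ℂ))^(2-1)
          * (-((σ:ℂ) * ((-Real.sin (ν*ξ)*ν : ℝ):ℂ)))) ξ :=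
      by have := (hasDerivAt_pow 2 (2*(ν:ℂ)*(Real.cosh (σ*τ):ℂ) - (σ:ℂ)*(Real.cos (ν*ξ):ℂ))).comp ξ (hDcx ξ); exact this
    have h2it : iteratedDeriv 2 F ξ = deriv (deriv F) ξ := by
      rw [iteratedDeriv_succ, iteratedDeriv_one]
    have hdG : deriv G ξ = E * ((-(N * ((σ:ℂ) * (((Real.cos (ν*ξ)*ν : ℝ):ℂ) * (ν:ℂ))))
          * (2*(ν:ℂ)*(Real.cosh (σ*τ):ℂ) - (σ:ℂ)*(Real.cos (ν*ξ):ℂ))^2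
        - (-(N * ((σ:ℂ) * ((Real.sin (ν*ξ):ℂ) * (ν:ℂ)))))
          * (((2:ℕ):ℂ) * (2*(ν:ℂ)*(Real.cosh (σ*τ):ℂ) - (σ:ℂ)*(Real.cos (ν*ξ):ℂ))^(2-1)
             * (-((σ:ℂ) * ((-Real.sin (ν*ξ)*ν : ℝ):ℂ)))))
        / ((2*(ν:ℂ)*(Real.cosh (σ*τ):ℂ) - (σ:ℂ)*(Real.cos (ν*ξ):ℂ))^2)^2) :=
      ((hnum.div hden (pow_ne_zero 2 hDC)).const_mul E).deriv
    rw [hfun, h2it, hEq.deriv_eq, hdG, split2 _ _ _ _ hDC]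
    rw [hN0, hE0]
    push_cast
    ring
  -- modulus squared
  have hd3 : ((‖A ξ τ‖ : ℝ) : ℂ)^2
      = (((ν:ℂ)^3*(Real.cosh (σ*τ):ℂ) + Complex.I*(ν:ℂ)*(σ:ℂ)*(Real.sinh (σ*τ):ℂ))
          /(2*(ν:ℂ)*(Real.cosh (σ*τ):ℂ) - (σ:ℂ)*(Real.cos (ν*ξ):ℂ)) - 1)
        * (((ν:ℂ)^3*(Real.cosh (σ*τ):ℂ) - Complex.I*(ν:ℂ)*(σ:ℂ)*(Real.sinh (σ*τ):ℂ))
          /(2*(ν:ℂ)*(Real.cosh (σ*τ):ℂ) - (σ:ℂ)*(Real.cos (ν*ξ):ℂ)) - 1) := by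
    rw [hA ξ τ]
    rw [norm_mul, Complex.norm_exp]
    have hre : (2*Complex.I*(τ:ℂ)).re = 0 := by simp
    rw [hre, Real.exp_zero, one_mul, ← Complex.ofReal_pow, Complex.sq_norm, ← Complex.mul_conj]
    simp only [map_sub, map_div₀, map_one, map_add, map_mul, map_pow, Complex.conj_I,
      Complex.conj_ofReal, map_ofNat]
    ring
  rw [hd1, hd2, hd3, hA ξ τ]
  exact key_alg (ν:ℂ) (σ:ℂ) (Real.cosh (σ*τ):ℂ) (Real.sinh (σ*τ):ℂ)
    (Real.cos (ν*ξ):ℂ) (Real.sin (ν*ξ):ℂ) (Complex.exp (2*Complex.I*(τ:ℂ))) hDC h1 h2 h3
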